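/- arXiv:0810.1130 — 2 statements merged into one kernel-verified Lean document; each statement's English description precedes it below -/
import Mathlib

section
/- Let G be a connected multigraph on vertex set [n] = {1,…,n}, let 1 ≤ m ≤ n, and let k ≥ 1. Then the number of (G,m)-multiparking functions f having exactly k roots (i.e. exactly k vertices v with f(v) = −1) equals Σ_F ∏_{{i,j} ∈ F} μ(i,j), where the sum runs over all spanning m-forests F of G having exactly k connected components. -/
open scoped Classical

/-- Out-degree of vertex `i` with respect to a vertex subset `I`:
the number of edges from `i` to vertices outside `I`. -/
def outdeg {n : ℕ} (μ : Fin n → Fin n → ℕ) (I : Finset (Fin n)) (i : Fin n) : ℕ :=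
  ∑ j ∈ Iᶜ, μ i j

/-- A `(G,m)`-multiparking function for the multigraph `G` given by the multiplicity
function `μ`. -/
def IsMultiparking {n : ℕ} (μ : Fin n → Fin n → ℕ) (m : Fin n) (f : Fin n → ℤ) : Prop :=
  (∀ i, -1 ≤ f i) ∧
  ∀ I : Finset (Fin n), I.Nonempty →
    (∃ a ∈ I, m ≤ a ∧ (∀ b ∈ I, m ≤ b → a ≤ b) ∧ f a = -1) ∨
    (∃ i ∈ I, 0 ≤ f i ∧ f i < (outdeg μ I i : ℤ))

/-- The simple support graph of the multigraph `μ`. -/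
def supportGraph {n : ℕ} (μ : Fin n → Fin n → ℕ) : SimpleGraph (Fin n) where
  Adj i j := i ≠ j ∧ 1 ≤ μ i j ∧ 1 ≤ μ j i
  symm := ⟨fun i j h => ⟨h.1.symm, h.2.2, h.2.1⟩⟩
  loopless := ⟨fun i h => h.1 rfl⟩

/-- A spanning `m`-forest of the multigraph `μ`. -/
def IsSpanningMForest {n : ℕ} (μ : Fin n → Fin n → ℕ) (m : Fin n)
    (F : Finset (Sym2 (Fin n))) : Prop :=
  (∀ i j : Fin n, s(i, j) ∈ F → i ≠ j ∧ 1 ≤ μ i j) ∧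
  (SimpleGraph.fromEdgeSet (F : Set (Sym2 (Fin n)))).IsAcyclic ∧
  ∀ v : Fin n, ∃ w : Fin n,
    (SimpleGraph.fromEdgeSet (F : Set (Sym2 (Fin n)))).Reachable v w ∧ m ≤ w

section
open Finset
namespace MPK

variable {n : ℕ}

/-- generic burning process driven by a choice function `nxt`. -/
noncomputable def safePick (nxt : ∀ U : Finset (Fin n), U.Nonempty → Fin n)
    (U : Finset (Fin n)) (h : U.Nonempty) : Fin n :=
  if nxt U h ∈ U then nxt U h else U.min' h

lemma safePick_mem (nxt : ∀ U : Finset (Fin n), U.Nonempty → Fin n)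
    (U : Finset (Fin n)) (h : U.Nonempty) : safePick nxt U h ∈ U := by
  rw [safePick]; split
  · assumption
  · exact Finset.min'_mem _ h

noncomputable def chain (nxt : ∀ U : Finset (Fin n), U.Nonempty → Fin n) : ℕ → Finset (Fin n)
  | 0 => Finset.univ
  | (t+1) =>
    if h : (chain nxt t).Nonempty then
      (chain nxt t).erase (safePick nxt (chain nxt t) h)
    else ∅

variable (nxt : ∀ U : Finset (Fin n), U.Nonempty → Fin n)

lemma chain_succ_subset (t : ℕ) : chain nxt (t+1) ⊆ chain nxt t := by
  rw [chain]
  split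
  · exact Finset.erase_subset _ _
  · simp

lemma chain_antitone : ∀ {s t : ℕ}, s ≤ t → chain nxt t ⊆ chain nxt s := by
  intro s t h
  induction t with
  | zero => simp_all
  | succ t ih =>
    rcases Nat.lt_or_ge s (t+1) with h' | h'
    · exact (chain_succ_subset nxt t).trans (ih (Nat.lt_succ_iff.mp h'))
    · have : s = t + 1 := le_antisymm h h'
      subst this; rfl

lemma chain_card (t : ℕ) : (chain nxt t).card = n - t := by
  induction t with
  | zero => simp [chain]
  | succ t ih =>
    rw [chain]
    split
    · next h =>
      rw [Finset.card_erase_of_mem (safePick_mem _ _ _), ih]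
      have : (chain nxt t).card ≠ 0 := Finset.card_ne_zero_of_mem h.choose_spec
      omega
    · next h =>
      rw [Finset.not_nonempty_iff_eq_empty] at h
      have := ih ▸ congrArg Finset.card h
      simp at this
      simp [this]
      omega

lemma chain_n : chain nxt n = ∅ := by
  have := chain_card nxt n
  simp at this
  rw [← Finset.card_eq_zero, chain_card]; omega

/-- the time at which `v` is removed (burnt): `v ∈ chain t ↔ t ≤ pos v`. -/
noncomputable def pos (v : Fin n) : ℕ :=
  Nat.find (⟨n, by rw [chain_n]; exact Finset.notMem_empty v⟩ : ∃ t, v ∉ chain nxt t) - 1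

lemma pos_add_one (v : Fin n) :
    pos nxt v + 1 = Nat.find (⟨n, by rw [chain_n]; exact Finset.notMem_empty v⟩ :
      ∃ t, v ∉ chain nxt t) := by
  rw [pos]
  have h1 : Nat.find (⟨n, by rw [chain_n]; exact Finset.notMem_empty v⟩ :
      ∃ t, v ∉ chain nxt t) ≠ 0 := by
    intro h
    have := Nat.find_spec (⟨n, by rw [chain_n]; exact Finset.notMem_empty v⟩ :
      ∃ t, v ∉ chain nxt t)
    rw [h] at this
    exact this (by simp [chain])
  omega

lemma mem_chain_iff (v : Fin n) (t : ℕ) : v ∈ chain nxt t ↔ t ≤ pos nxt v := by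
  constructor
  · intro h
    by_contra h'
    push_neg at h'
    have h2 : pos nxt v + 1 ≤ t := h'
    have := Nat.find_spec (⟨n, by rw [chain_n]; exact Finset.notMem_empty v⟩ :
      ∃ t, v ∉ chain nxt t)
    rw [← pos_add_one] at this
    exact this (chain_antitone nxt h2 h)
  · intro h
    have := Nat.find_min (⟨n, by rw [chain_n]; exact Finset.notMem_empty v⟩ :
      ∃ t, v ∉ chain nxt t) (m := t) (by rw [← pos_add_one]; omega)
    simpa using this

lemma not_mem_chain_iff (v : Fin n) (t : ℕ) : v ∉ chain nxt t ↔ pos nxt v < t := by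
  rw [mem_chain_iff]; omega

lemma pos_lt_n (v : Fin n) : pos nxt v < n := by
  have := chain_n nxt ▸ (Finset.notMem_empty v)
  rw [not_mem_chain_iff] at this; exact this

lemma mem_chain_pos (v : Fin n) : v ∈ chain nxt (pos nxt v) := by
  rw [mem_chain_iff]

lemma chain_pos_nonempty (v : Fin n) : (chain nxt (pos nxt v)).Nonempty :=
  ⟨v, mem_chain_pos nxt v⟩

lemma pos_injective : Function.Injective (pos nxt) := by
  intro v w h
  have hv : v ∉ chain nxt (pos nxt v + 1) := by rw [not_mem_chain_iff]; omega
  have hw : w ∉ chain nxt (pos nxt v + 1) := by rw [not_mem_chain_iff]; omega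
  have hv2 := mem_chain_pos nxt v
  have hw2 := h ▸ mem_chain_pos nxt w
  rw [chain, dif_pos (chain_pos_nonempty nxt v)] at hv hw
  have h1 : v = safePick nxt _ (chain_pos_nonempty nxt v) := by
    by_contra hne
    exact hv (Finset.mem_erase.mpr ⟨hne, hv2⟩)
  have h2 : w = safePick nxt _ (chain_pos_nonempty nxt v) := by
    by_contra hne
    exact hw (Finset.mem_erase.mpr ⟨hne, hw2⟩)
  rw [h1, h2]

/-- the element burnt at time `pos v` is `v` itself. -/
lemma safePick_pos (v : Fin n) : safePick nxt _ (chain_pos_nonempty nxt v) = v := by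
  have hv : v ∉ chain nxt (pos nxt v + 1) := by rw [not_mem_chain_iff]; omega
  rw [chain, dif_pos (chain_pos_nonempty nxt v)] at hv
  by_contra hne
  exact hv (Finset.mem_erase.mpr ⟨fun h => hne h.symm, mem_chain_pos nxt v⟩)

lemma pos_surjective (t : ℕ) (ht : t < n) : ∃ v, pos nxt v = t := by
  have hne : (chain nxt t).Nonempty := by
    rw [← Finset.card_pos, chain_card]; omega
  refine ⟨safePick nxt _ hne, ?_⟩
  have hmem := safePick_mem nxt _ hne
  have h1 : safePick nxt _ hne ∉ chain nxt (t+1) := by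
    rw [chain, dif_pos hne]
    simp
  rw [not_mem_chain_iff] at h1
  rw [mem_chain_iff] at hmem
  omega

/-- if `nxt` respects membership, the element picked at time `pos v` is `nxt`,
so `v = nxt (chain (pos v))`. -/
lemma nxt_pos_eq (hmem : ∀ U h, nxt U h ∈ U) (v : Fin n) :
    nxt _ (chain_pos_nonempty nxt v) = v := by
  have := safePick_pos nxt v
  rwa [safePick, if_pos (hmem _ _)] at this

lemma compl_chain (t : ℕ) : (chain nxt t)ᶜ = Finset.univ.filter (fun j => pos nxt j < t) := by
  ext x
  simp [not_mem_chain_iff, Finset.mem_compl]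

lemma outdeg_chain (μ : Fin n → Fin n → ℕ) (t : ℕ) (i : Fin n) :
    outdeg μ (chain nxt t) i = ∑ j ∈ Finset.univ.filter (fun j => pos nxt j < t), μ i j := by
  rw [outdeg, compl_chain]

section Decode
variable (μ : Fin n → Fin n → ℕ)

/-- Sum of multiplicities from `i` to vertices burnt before time `T`. -/
noncomputable def psum (i : Fin n) (T : ℕ) : ℕ :=
  ∑ j ∈ Finset.univ.filter (fun j => pos nxt j < T), μ i j

lemma psum_mono (i : Fin n) {T T' : ℕ} (h : T ≤ T') : psum nxt μ i T ≤ psum nxt μ i T' := by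
  apply Finset.sum_le_sum_of_subset
  intro x hx
  simp only [Finset.mem_filter, Finset.mem_univ, true_and] at hx ⊢
  omega

lemma psum_succ (i : Fin n) {t : ℕ} {v : Fin n} (hv : pos nxt v = t) :
    psum nxt μ i (t+1) = psum nxt μ i t + μ i v := by
  rw [psum, psum]
  have : Finset.univ.filter (fun j => pos nxt j < t + 1)
      = insert v (Finset.univ.filter (fun j => pos nxt j < t)) := by
    ext x
    simp only [Finset.mem_filter, Finset.mem_insert, Finset.mem_univ, true_and]
    constructor
    · intro hx
      rcases Nat.lt_or_ge (pos nxt x) t with h | h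
      · exact Or.inr h
      · have : pos nxt x = t := by omega
        exact Or.inl (pos_injective nxt (by rw [this, hv]))
    · rintro (rfl | hx)
      · omega
      · omega
  rw [this, Finset.sum_insert (by simp [hv])]
  ring

lemma psum_zero (i : Fin n) : psum nxt μ i 0 = 0 := by
  simp [psum]

/-- decoding: find the unique burnt vertex whose slot-interval contains `c`. -/
lemma decode (i : Fin n) (c : ℤ) (T : ℕ) (hT : T ≤ n) (hc : 0 ≤ c)
    (hlt : c < (psum nxt μ i T : ℤ)) :
    ∃! j : Fin n, pos nxt j < T ∧ (psum nxt μ i (pos nxt j) : ℤ) ≤ c ∧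
      c < (psum nxt μ i (pos nxt j) : ℤ) + μ i j := by
  have hex : ∃ t, c < (psum nxt μ i t : ℤ) := ⟨T, hlt⟩
  set t₀ := Nat.find hex with ht₀
  have hspec : c < (psum nxt μ i t₀ : ℤ) := Nat.find_spec hex
  have ht₀pos : t₀ ≠ 0 := by
    intro h
    rw [h, psum_zero] at hspec
    omega
  have ht₀le : t₀ ≤ T := Nat.find_le hlt
  obtain ⟨v, hv⟩ := pos_surjective nxt (t₀ - 1) (by omega)
  have hmin : ¬ c < (psum nxt μ i (t₀ - 1) : ℤ) := Nat.find_min hex (by omega)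
  push_neg at hmin
  have hsucc : psum nxt μ i t₀ = psum nxt μ i (t₀ - 1) + μ i v := by
    have := psum_succ nxt μ i hv
    rwa [Nat.sub_add_cancel (by omega)] at this
  refine ⟨v, ⟨by omega, ?_, ?_⟩, ?_⟩
  · rw [hv]; exact hmin
  · rw [hv]
    rw [hsucc] at hspec
    push_cast at hspec ⊢
    omega
  · rintro j ⟨hj1, hj2, hj3⟩
    by_contra hne
    have hps : pos nxt j ≠ pos nxt v := fun h => hne (pos_injective nxt h)
    rcases Nat.lt_or_ge (pos nxt j) (pos nxt v) with h | h
    · -- j earlier: c < psum (pos j) + μ i j ≤ psum (pos j + 1) ≤ psum (pos v) ≤ c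
      have h1 : psum nxt μ i (pos nxt j) + μ i j = psum nxt μ i (pos nxt j + 1) :=
        (psum_succ nxt μ i rfl).symm
      have h2 : psum nxt μ i (pos nxt j + 1) ≤ psum nxt μ i (pos nxt v) :=
        psum_mono nxt μ i (by omega)
      have h3 : (psum nxt μ i (pos nxt v) : ℤ) ≤ c := by rw [hv]; exact hmin
      push_cast [h1] at hj3
      have := h2
      omega
    · have h : pos nxt v < pos nxt j := by omega
      have h1 : psum nxt μ i (pos nxt v) + μ i v = psum nxt μ i (pos nxt v + 1) :=
        (psum_succ nxt μ i rfl).symm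
      have h2 : psum nxt μ i (pos nxt v + 1) ≤ psum nxt μ i (pos nxt j) :=
        psum_mono nxt μ i (by omega)
      rw [hsucc] at hspec
      have h4 : psum nxt μ i (t₀ - 1) = psum nxt μ i (pos nxt v) := by rw [hv]
      rw [h4] at hspec
      have h3 : (psum nxt μ i (pos nxt v) : ℤ) + μ i v ≤ psum nxt μ i (pos nxt j) := by
        have : psum nxt μ i (pos nxt v) + μ i v ≤ psum nxt μ i (pos nxt j) := by
          rw [h1]; exact h2
        exact_mod_cast this
      omega
end Decode

section Instances
variable (μ : Fin n → Fin n → ℕ) (m : Fin n)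

/-- eligible vertices for rule B w.r.t. `f`. -/
noncomputable def Sset (f : Fin n → ℤ) (U : Finset (Fin n)) : Finset (Fin n) :=
  U.filter fun i => 0 ≤ f i ∧ f i < (outdeg μ U i : ℤ)

/-- vertices of `U` that are `≥ m`. -/
noncomputable def Aset (U : Finset (Fin n)) : Finset (Fin n) :=
  U.filter fun i => m ≤ i

/-- choice function of the `f`-process. -/
noncomputable def nextf (f : Fin n → ℤ) (U : Finset (Fin n)) (h : U.Nonempty) : Fin n :=
  if hS : (Sset μ f U).Nonempty then (Sset μ f U).min' hS
  else if hA : (Aset m U).Nonempty then (Aset m U).min' hA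
  else U.min' h

lemma nextf_mem (f : Fin n → ℤ) (U : Finset (Fin n)) (h : U.Nonempty) :
    nextf μ m f U h ∈ U := by
  rw [nextf]
  split
  · next hS => exact Finset.mem_of_mem_filter _ (Finset.min'_mem _ hS)
  · split
    · next hA => exact Finset.mem_of_mem_filter _ (Finset.min'_mem _ hA)
    · exact Finset.min'_mem _ h

/-- eligible vertices for rule B w.r.t. a forest `F`: unburnt vertices with a burnt
`F`-neighbour. -/
noncomputable def Sp (F : Finset (Sym2 (Fin n))) (U : Finset (Fin n)) : Finset (Fin n) :=
  U.filter fun i => ∃ j, j ∉ U ∧ s(i, j) ∈ F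

/-- choice function of the `F`-process. -/
noncomputable def nextF (F : Finset (Sym2 (Fin n))) (U : Finset (Fin n)) (h : U.Nonempty) :
    Fin n :=
  if hS : (Sp F U).Nonempty then (Sp F U).min' hS
  else if hA : (Aset m U).Nonempty then (Aset m U).min' hA
  else U.min' h

lemma nextF_mem (F : Finset (Sym2 (Fin n))) (U : Finset (Fin n)) (h : U.Nonempty) :
    nextF m F U h ∈ U := by
  rw [nextF]
  split
  · next hS => exact Finset.mem_of_mem_filter _ (Finset.min'_mem _ hS)
  · split
    · next hA => exact Finset.mem_of_mem_filter _ (Finset.min'_mem _ hA)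
    · exact Finset.min'_mem _ h

/-- a witness for the multiparking condition on `U`. -/
def Witness (f : Fin n → ℤ) (U : Finset (Fin n)) (x : Fin n) : Prop :=
  x ∈ U ∧ ((m ≤ x ∧ (∀ b ∈ U, m ≤ b → x ≤ b) ∧ f x = -1) ∨
    (0 ≤ f x ∧ f x < (outdeg μ U x : ℤ)))

/-- Soundness: if a burning process is valid at every step for `f`,
then `f` is a multiparking function (given `f ≥ -1`). -/
lemma isMultiparking_of_valid (f : Fin n → ℤ) (hlb : ∀ i, -1 ≤ f i)
    (nxt : ∀ U : Finset (Fin n), U.Nonempty → Fin n)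
    (hmem : ∀ U h, nxt U h ∈ U)
    (hval : ∀ t, (h : (chain nxt t).Nonempty) → Witness μ m f (chain nxt t) (nxt _ h)) :
    IsMultiparking μ m f := by
  refine ⟨hlb, fun I hI => ?_⟩
  obtain ⟨v, hvI, hvmin⟩ := Finset.exists_min_image I (pos nxt) hI
  set U := chain nxt (pos nxt v) with hU
  have hIU : I ⊆ U := by
    intro u hu
    rw [hU, mem_chain_iff]
    exact hvmin u hu
  have hw := hval (pos nxt v) (chain_pos_nonempty nxt v)
  rw [nxt_pos_eq nxt hmem v] at hw
  rcases hw.2 with ⟨hmv, hminv, hfv⟩ | ⟨h0, hout⟩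
  · exact Or.inl ⟨v, hvI, hmv, fun b hb hmb => hminv b (hIU hb) hmb, hfv⟩
  · refine Or.inr ⟨v, hvI, h0, lt_of_lt_of_le hout ?_⟩
    have : outdeg μ U v ≤ outdeg μ I v := by
      apply Finset.sum_le_sum_of_subset
      exact Finset.compl_subset_compl.mpr hIU
    exact_mod_cast this

/-- Completeness: a multiparking function has a valid `f`-process. -/
lemma valid_of_isMultiparking (f : Fin n → ℤ) (hf : IsMultiparking μ m f) :
    ∀ t, (h : (chain (nextf μ m f) t).Nonempty) →
      Witness μ m f (chain (nextf μ m f) t) (nextf μ m f _ h) := by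
  intro t h
  set U := chain (nextf μ m f) t
  rcases hf.2 U h with ⟨a, haU, hma, hmin, hfa⟩ | ⟨i, hiU, h0, hout⟩
  · -- no B witness might exist; split on Sset
    by_cases hS : (Sset μ f U).Nonempty
    · have hx := Finset.min'_mem _ hS
      simp only [Sset, Finset.mem_filter] at hx
      rw [Witness, nextf, dif_pos hS]
      exact ⟨hx.1, Or.inr hx.2⟩
    · have hA : (Aset m U).Nonempty := ⟨a, by simp only [Aset, Finset.mem_filter]; exact ⟨haU, hma⟩⟩
      have hxa : (Aset m U).min' hA = a := by
        apply le_antisymm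
        · exact Finset.min'_le _ _ (by simp only [Aset, Finset.mem_filter]; exact ⟨haU, hma⟩)
        · have := Finset.min'_mem _ hA
          simp only [Aset, Finset.mem_filter] at this
          exact hmin _ this.1 this.2
      rw [Witness, nextf, dif_neg hS, dif_pos hA, hxa]
      exact ⟨haU, Or.inl ⟨hma, fun b hb hmb => hmin b hb hmb, hfa⟩⟩
  · have hS : (Sset μ f U).Nonempty := ⟨i, by simp only [Sset, Finset.mem_filter]; exact ⟨hiU, h0, hout⟩⟩
    have hx := Finset.min'_mem _ hS
    simp only [Sset, Finset.mem_filter] at hx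
    rw [Witness, nextf, dif_pos hS]
    exact ⟨hx.1, Or.inr hx.2⟩
end Instances

section Graph
open SimpleGraph

lemma mem_of_reachable_closed {V : Type*} {G : SimpleGraph V} {B : Set V}
    (hB : ∀ x y, x ∈ B → G.Adj x y → y ∈ B) {x y : V} (hx : x ∈ B) (h : G.Reachable x y) :
    y ∈ B := by
  obtain ⟨w⟩ := h
  induction w with
  | nil => exact hx
  | cons h p ih => exact ih (hB _ _ hx h)

lemma acyclic_of_injective_height {V : Type*} [Fintype V] [DecidableEq V] (G : SimpleGraph V)
    (ht : V → ℕ) (hinj : Function.Injective ht)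
    (huniq : ∀ a b c, G.Adj a b → G.Adj a c → ht b < ht a → ht c < ht a → b = c) :
    G.IsAcyclic := by
  intro v c hc
  obtain ⟨u, hu, hmax⟩ := Finset.exists_max_image c.support.toFinset ht
    ⟨v, List.mem_toFinset.mpr c.start_mem_support⟩
  rw [List.mem_toFinset] at hu
  have hc' := hc.rotate hu
  have hsupp : ∀ x, x ∈ (c.rotate u hu).support → x ∈ c.support := by
    intro x hx
    rw [(c.rotate u hu).support_eq_cons] at hx
    rcases List.mem_cons.mp hx with rfl | hx
    · exact hu
    · have := (SimpleGraph.Walk.support_rotate c u hu).mem_iff.mp hx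
      rw [c.support_eq_cons]
      exact List.mem_cons.mpr (Or.inr this)
  obtain ⟨x, h₁, q, hpq⟩ := SimpleGraph.Walk.not_nil_iff.mp hc'.not_nil
  rw [hpq] at hc'
  rw [SimpleGraph.Walk.cons_isCycle_iff] at hc'
  have hxu : x ≠ u := fun h => h₁.ne h.symm
  obtain ⟨y, h₂, r, hqr⟩ := SimpleGraph.Walk.exists_eq_cons_of_ne
    (fun h : u = x => h₁.ne h) q.reverse
  have hyu : y ≠ u := fun h => h₂.ne h.symm
  have hys : y ∈ q.support := by
    have : y ∈ q.reverse.support := by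
      rw [hqr, SimpleGraph.Walk.support_cons]
      exact List.mem_cons.mpr (Or.inr (SimpleGraph.Walk.start_mem_support r))
    rwa [SimpleGraph.Walk.support_reverse, List.mem_reverse] at this
  have hxs : x ∈ q.support := SimpleGraph.Walk.start_mem_support q
  have hqsub : ∀ z, z ∈ q.support → z ∈ c.support := by
    intro z hz
    apply hsupp
    rw [hpq, SimpleGraph.Walk.support_cons]
    exact List.mem_cons.mpr (Or.inr hz)
  have hxlt : ht x < ht u :=
    lt_of_le_of_ne (hmax x (List.mem_toFinset.mpr (hqsub x hxs)))
      (fun h => hxu (hinj h))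
  have hylt : ht y < ht u :=
    lt_of_le_of_ne (hmax y (List.mem_toFinset.mpr (hqsub y hys)))
      (fun h => hyu (hinj h))
  have hxy : x = y := huniq u x y h₁ h₂ hxlt hylt
  apply hc'.2
  have : s(u, y) ∈ q.reverse.edges := by
    have h3 := congrArg SimpleGraph.Walk.edges hqr
    rw [h3, SimpleGraph.Walk.edges_cons]
    exact List.mem_cons_self
  rw [SimpleGraph.Walk.edges_reverse, List.mem_reverse] at this
  subst hxy
  exact this
end Graph

section Phi
variable (μ : Fin n → Fin n → ℕ) (m : Fin n) (f : Fin n → ℤ)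

lemma psum_eq_outdeg (nxt : ∀ U : Finset (Fin n), U.Nonempty → Fin n) (i : Fin n) (t : ℕ) :
    psum nxt μ i t = outdeg μ (chain nxt t) i := (outdeg_chain nxt μ t i).symm

lemma witness_at (hf : IsMultiparking μ m f) (i : Fin n) :
    Witness μ m f (chain (nextf μ m f) (pos (nextf μ m f) i)) i := by
  have := valid_of_isMultiparking μ m f hf (pos (nextf μ m f) i)
    (chain_pos_nonempty (nextf μ m f) i)
  rwa [nxt_pos_eq (nextf μ m f) (nextf_mem μ m f) i] at this

lemma slot_of_nonneg (hf : IsMultiparking μ m f) (i : Fin n) (h0 : 0 ≤ f i) :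
    f i < (psum (nextf μ m f) μ i (pos (nextf μ m f) i) : ℤ) := by
  rcases (witness_at μ m f hf i).2 with ⟨_, _, hroot⟩ | ⟨_, hlt⟩
  · omega
  · rwa [psum_eq_outdeg]

lemma rootA (hf : IsMultiparking μ m f) (i : Fin n) (hroot : f i = -1) :
    m ≤ i ∧ ∀ b ∈ chain (nextf μ m f) (pos (nextf μ m f) i), m ≤ b → i ≤ b := by
  rcases (witness_at μ m f hf i).2 with ⟨h1, h2, _⟩ | ⟨h0, _⟩
  · exact ⟨h1, h2⟩
  · omega

lemma Sset_empty_at_root (hf : IsMultiparking μ m f) (i : Fin n) (hroot : f i = -1) :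
    Sset μ f (chain (nextf μ m f) (pos (nextf μ m f) i)) = ∅ := by
  by_contra hne
  rw [← Finset.not_nonempty_iff_eq_empty, not_not] at hne
  have h1 := nxt_pos_eq (nextf μ m f) (nextf_mem μ m f) i
  rw [nextf, dif_pos hne] at h1
  have := Finset.min'_mem _ hne
  rw [h1] at this
  simp only [Sset, Finset.mem_filter] at this
  omega

/-- the parent of a non-root vertex in the `f`-process. -/
noncomputable def par (hf : IsMultiparking μ m f) (i : Fin n) : Fin n :=
  if h0 : 0 ≤ f i then
    (decode (nextf μ m f) μ i (f i) (pos (nextf μ m f) i)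
      (le_of_lt (pos_lt_n (nextf μ m f) i)) h0 (slot_of_nonneg μ m f hf i h0)).exists.choose
  else i

lemma par_spec (hf : IsMultiparking μ m f) (i : Fin n) (h0 : 0 ≤ f i) :
    pos (nextf μ m f) (par μ m f hf i) < pos (nextf μ m f) i ∧
    (psum (nextf μ m f) μ i (pos (nextf μ m f) (par μ m f hf i)) : ℤ) ≤ f i ∧
    f i < (psum (nextf μ m f) μ i (pos (nextf μ m f) (par μ m f hf i)) : ℤ) +
      μ i (par μ m f hf i) := by
  rw [par, dif_pos h0]
  exact (decode (nextf μ m f) μ i (f i) (pos (nextf μ m f) i)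
    (le_of_lt (pos_lt_n (nextf μ m f) i)) h0
    (slot_of_nonneg μ m f hf i h0)).exists.choose_spec

lemma par_unique (hf : IsMultiparking μ m f) (i : Fin n) (h0 : 0 ≤ f i) (j : Fin n)
    (hj : pos (nextf μ m f) j < pos (nextf μ m f) i ∧
      (psum (nextf μ m f) μ i (pos (nextf μ m f) j) : ℤ) ≤ f i ∧
      f i < (psum (nextf μ m f) μ i (pos (nextf μ m f) j) : ℤ) + μ i j) :
    j = par μ m f hf i := by
  have hdec := decode (nextf μ m f) μ i (f i) (pos (nextf μ m f) i)
    (le_of_lt (pos_lt_n (nextf μ m f) i)) h0 (slot_of_nonneg μ m f hf i h0)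
  rw [hdec.unique hj (hdec.exists.choose_spec)]
  rw [par, dif_pos h0]

lemma par_pos_lt (hf : IsMultiparking μ m f) (i : Fin n) (h0 : 0 ≤ f i) :
    pos (nextf μ m f) (par μ m f hf i) < pos (nextf μ m f) i := (par_spec μ m f hf i h0).1

lemma par_ne (hf : IsMultiparking μ m f) (i : Fin n) (h0 : 0 ≤ f i) :
    par μ m f hf i ≠ i := by
  intro h
  have := par_pos_lt μ m f hf i h0
  rw [h] at this
  omega

lemma one_le_mu_par (hf : IsMultiparking μ m f) (i : Fin n) (h0 : 0 ≤ f i) :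
    1 ≤ μ i (par μ m f hf i) := by
  have := par_spec μ m f hf i h0
  omega

/-- the forest associated to a multiparking function. -/
noncomputable def Ff (hf : IsMultiparking μ m f) : Finset (Sym2 (Fin n)) :=
  (Finset.univ.filter fun i => 0 ≤ f i).image fun i => s(i, par μ m f hf i)

lemma mem_Ff_iff (hf : IsMultiparking μ m f) (e : Sym2 (Fin n)) :
    e ∈ Ff μ m f hf ↔ ∃ i, 0 ≤ f i ∧ e = s(i, par μ m f hf i) := by
  simp only [Ff, Finset.mem_image, Finset.mem_filter, Finset.mem_univ, true_and]
  constructor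
  · rintro ⟨i, h1, h2⟩; exact ⟨i, h1, h2.symm⟩
  · rintro ⟨i, h1, h2⟩; exact ⟨i, h1, h2.symm⟩

/-- earlier neighbours in `Ff` are exactly parents. -/
lemma earlier_nbr (hf : IsMultiparking μ m f) (a b : Fin n)
    (hab : s(a, b) ∈ Ff μ m f hf)
    (hlt : pos (nextf μ m f) b < pos (nextf μ m f) a) :
    0 ≤ f a ∧ b = par μ m f hf a := by
  rw [mem_Ff_iff] at hab
  obtain ⟨i, h0, he⟩ := hab
  rw [Sym2.eq_iff] at he
  rcases he with ⟨rfl, rfl⟩ | ⟨rfl, rfl⟩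
  · exact ⟨h0, rfl⟩
  · have := par_pos_lt μ m f hf b h0
    omega
end Phi

section Phi2
open SimpleGraph
variable (μ : Fin n → Fin n → ℕ) (m : Fin n) (f : Fin n → ℤ)

lemma Ff_adj (hf : IsMultiparking μ m f) (a b : Fin n) :
    (fromEdgeSet ((Ff μ m f hf : Finset (Sym2 (Fin n))) : Set (Sym2 (Fin n)))).Adj a b ↔
      s(a, b) ∈ Ff μ m f hf ∧ a ≠ b := by
  rw [fromEdgeSet_adj]; simp

lemma Ff_adj_par (hf : IsMultiparking μ m f) (i : Fin n) (h0 : 0 ≤ f i) :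
    (fromEdgeSet ((Ff μ m f hf : Finset (Sym2 (Fin n))) : Set (Sym2 (Fin n)))).Adj i
      (par μ m f hf i) := by
  rw [Ff_adj]
  exact ⟨(mem_Ff_iff μ m f hf _).mpr ⟨i, h0, rfl⟩, (par_ne μ m f hf i h0).symm⟩

lemma Ff_acyclic (hf : IsMultiparking μ m f) :
    (fromEdgeSet ((Ff μ m f hf : Finset (Sym2 (Fin n))) : Set (Sym2 (Fin n)))).IsAcyclic := by
  apply acyclic_of_injective_height _ (pos (nextf μ m f)) (pos_injective _)
  intro a b c hab hac hb hc
  have h1 := earlier_nbr μ m f hf a b ((Ff_adj μ m f hf a b).mp hab).1 hb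
  have h2 := earlier_nbr μ m f hf a c ((Ff_adj μ m f hf a c).mp hac).1 hc
  rw [h1.2, h2.2]

/-- every vertex reaches a root, which is `≥ m`. -/
lemma Ff_reach (hf : IsMultiparking μ m f) (v : Fin n) :
    ∃ w, (fromEdgeSet ((Ff μ m f hf : Finset (Sym2 (Fin n))) : Set (Sym2 (Fin n)))).Reachable v w
      ∧ m ≤ w ∧ f w = -1 := by
  generalize hT : pos (nextf μ m f) v = T
  induction T using Nat.strong_induction_on generalizing v with
  | _ T ih =>
    by_cases h0 : 0 ≤ f v
    · obtain ⟨w, hw1, hw2⟩ := ih (pos (nextf μ m f) (par μ m f hf v))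
        (by rw [← hT]; exact par_pos_lt μ m f hf v h0) (par μ m f hf v) rfl
      exact ⟨w, (Ff_adj_par μ m f hf v h0).reachable.trans hw1, hw2⟩
    · have hroot : f v = -1 := by have := hf.1 v; omega
      exact ⟨v, Reachable.refl v, (rootA μ m f hf v hroot).1, hroot⟩

/-- burnt set is closed at the burning time of a root. -/
lemma Ff_closed_at_root (hf : IsMultiparking μ m f) (r : Fin n) (hroot : f r = -1)
    (x y : Fin n)
    (hadj : (fromEdgeSet ((Ff μ m f hf : Finset (Sym2 (Fin n))) : Set (Sym2 (Fin n)))).Adj x y)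
    (hx : pos (nextf μ m f) x < pos (nextf μ m f) r) :
    pos (nextf μ m f) y < pos (nextf μ m f) r := by
  by_contra hy
  push_neg at hy
  have hne : pos (nextf μ m f) x < pos (nextf μ m f) y := by
    rcases Nat.lt_trichotomy (pos (nextf μ m f) x) (pos (nextf μ m f) y) with h | h | h
    · exact h
    · exact absurd (pos_injective _ h) ((Ff_adj μ m f hf x y).mp hadj).2
    · omega
  have h1 := earlier_nbr μ m f hf y x (by rw [Sym2.eq_swap]; exact ((Ff_adj μ m f hf x y).mp hadj).1) hne
  -- y ∈ Sset at time pos r: contradiction with Sset empty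
  have hSe := Sset_empty_at_root μ m f hf r hroot
  have hyS : y ∈ Sset μ f (chain (nextf μ m f) (pos (nextf μ m f) r)) := by
    simp only [Sset, Finset.mem_filter]
    refine ⟨by rw [mem_chain_iff]; exact hy, h1.1, ?_⟩
    rw [← psum_eq_outdeg]
    have h2 := (par_spec μ m f hf y h1.1).2.2
    rw [← h1.2] at h2
    calc f y < (psum (nextf μ m f) μ y (pos (nextf μ m f) x) : ℤ) + μ y x := h2
    _ ≤ (psum (nextf μ m f) μ y (pos (nextf μ m f) x + 1) : ℤ) := by
        rw [psum_succ (nextf μ m f) μ y (rfl : pos (nextf μ m f) x = _)]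
        push_cast; omega
    _ ≤ (psum (nextf μ m f) μ y (pos (nextf μ m f) r) : ℤ) := by
        exact_mod_cast psum_mono (nextf μ m f) μ y (by omega)
  rw [hSe] at hyS
  exact absurd hyS (Finset.notMem_empty y)

/-- each component contains exactly one root; root count = component count. -/
lemma Ff_card_components (hf : IsMultiparking μ m f) :
    Nat.card (fromEdgeSet ((Ff μ m f hf : Finset (Sym2 (Fin n))) :
        Set (Sym2 (Fin n)))).ConnectedComponent
      = (Finset.univ.filter fun v => f v = -1).card := by
  set G := fromEdgeSet ((Ff μ m f hf : Finset (Sym2 (Fin n))) : Set (Sym2 (Fin n))) with hG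
  have hbij : Function.Bijective
      (fun r : {x // x ∈ Finset.univ.filter fun v => f v = -1} => G.connectedComponentMk r.1) := by
    constructor
    · rintro ⟨r₁, h₁⟩ ⟨r₂, h₂⟩ h
      simp only [Finset.mem_filter, Finset.mem_univ, true_and] at h₁ h₂
      simp only [ConnectedComponent.eq] at h
      refine Subtype.ext ?_
      by_contra hne'

      -- wlog pos r₁ < pos r₂
      rcases Nat.lt_trichotomy (pos (nextf μ m f) r₁) (pos (nextf μ m f) r₂) with hlt | heq | hlt
      · have : r₂ ∈ {x : Fin n | pos (nextf μ m f) x < pos (nextf μ m f) r₂} :=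
          mem_of_reachable_closed
            (fun x y hx hadj => Ff_closed_at_root μ m f hf r₂ h₂ x y hadj hx) hlt h
        simp at this
      · exact hne' (pos_injective _ heq)
      · have : r₁ ∈ {x : Fin n | pos (nextf μ m f) x < pos (nextf μ m f) r₁} :=
          mem_of_reachable_closed
            (fun x y hx hadj => Ff_closed_at_root μ m f hf r₁ h₁ x y hadj hx) hlt h.symm
        simp at this
    · intro c
      obtain ⟨v, rfl⟩ := c.exists_rep
      obtain ⟨w, hw1, _, hw3⟩ := Ff_reach μ m f hf v
      exact ⟨⟨w, by simp [hw3]⟩, SimpleGraph.ConnectedComponent.eq.mpr hw1.symm⟩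
  have := Nat.card_congr (Equiv.ofBijective _ hbij)
  rw [← this, Nat.card_eq_fintype_card, Fintype.card_coe]
end Phi2

section Psi
open SimpleGraph
variable (μ : Fin n → Fin n → ℕ) (m : Fin n) (F : Finset (Sym2 (Fin n)))

lemma mem_Sp (U : Finset (Fin n)) (i : Fin n) :
    i ∈ Sp F U ↔ i ∈ U ∧ ∃ j, j ∉ U ∧ s(i, j) ∈ F := by
  simp [Sp]

lemma Sp_empty_closed (t : ℕ) (hSp : Sp F (chain (nextF m F) t) = ∅)
    (x y : Fin n) (hadj : (fromEdgeSet (F : Set (Sym2 (Fin n)))).Adj x y)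
    (hx : pos (nextF m F) x < t) : pos (nextF m F) y < t := by
  by_contra hy
  push_neg at hy
  have : y ∈ Sp F (chain (nextF m F) t) := by
    rw [mem_Sp]
    rw [fromEdgeSet_adj] at hadj
    refine ⟨by rw [mem_chain_iff]; exact hy, x, by rw [not_mem_chain_iff]; exact hx, ?_⟩
    rw [Sym2.eq_swap]; exact hadj.1
  rw [hSp] at this
  exact absurd this (Finset.notMem_empty y)

lemma Aset_nonempty_of_Sp_empty (hF : IsSpanningMForest μ m F) (t : ℕ)
    (h : (chain (nextF m F) t).Nonempty) (hSp : Sp F (chain (nextF m F) t) = ∅) :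
    (Aset m (chain (nextF m F) t)).Nonempty := by
  obtain ⟨v, hv⟩ := h
  obtain ⟨w, hw1, hw2⟩ := hF.2.2 v
  have hclosed : ∀ x y, x ∈ (chain (nextF m F) t : Set (Fin n)) →
      (fromEdgeSet (F : Set (Sym2 (Fin n)))).Adj x y → y ∈ (chain (nextF m F) t : Set (Fin n)) := by
    intro x y hx hadj
    simp only [Finset.coe_mem, Finset.mem_coe] at *
    by_contra hy
    have : x ∈ Sp F (chain (nextF m F) t) := by
      rw [mem_Sp]
      rw [fromEdgeSet_adj] at hadj
      exact ⟨hx, y, hy, hadj.1⟩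
    rw [hSp] at this
    exact absurd this (Finset.notMem_empty x)
  have hw : w ∈ (chain (nextF m F) t : Set (Fin n)) :=
    mem_of_reachable_closed hclosed (by simpa using hv) hw1
  exact ⟨w, by rw [Aset, Finset.mem_filter]; exact ⟨by simpa using hw, hw2⟩⟩

/-- a root of the `F`-process: all its `F`-neighbours burn later. -/
def rootF (i : Fin n) : Prop :=
  ∀ j, (fromEdgeSet (F : Set (Sym2 (Fin n)))).Adj i j →
    pos (nextF m F) i < pos (nextF m F) j

lemma mem_Sp_at_iff (i : Fin n) :
    i ∈ Sp F (chain (nextF m F) (pos (nextF m F) i)) ↔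
      ∃ j, (fromEdgeSet (F : Set (Sym2 (Fin n)))).Adj i j ∧
        pos (nextF m F) j < pos (nextF m F) i := by
  rw [mem_Sp]
  constructor
  · rintro ⟨-, j, hj1, hj2⟩
    rw [not_mem_chain_iff] at hj1
    refine ⟨j, ?_, hj1⟩
    rw [fromEdgeSet_adj]
    exact ⟨hj2, fun h => by subst h; omega⟩
  · rintro ⟨j, hadj, hlt⟩
    rw [fromEdgeSet_adj] at hadj
    exact ⟨mem_chain_pos _ i, j, by rw [not_mem_chain_iff]; exact hlt, hadj.1⟩

lemma branchF (i : Fin n) :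
    Sp F (chain (nextF m F) (pos (nextF m F) i)) = ∅ ∨
      i ∈ Sp F (chain (nextF m F) (pos (nextF m F) i)) := by
  have h1 := nxt_pos_eq (nextF m F) (nextF_mem m F) i
  by_cases hS : (Sp F (chain (nextF m F) (pos (nextF m F) i))).Nonempty
  · rw [nextF, dif_pos hS] at h1
    have h2 := Finset.min'_mem _ hS
    rw [h1] at h2
    exact Or.inr h2
  · exact Or.inl (Finset.not_nonempty_iff_eq_empty.mp hS)

lemma rootF_iff_Sp_empty (i : Fin n) :
    rootF m F i ↔ Sp F (chain (nextF m F) (pos (nextF m F) i)) = ∅ := by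
  constructor
  · intro hr
    rcases branchF m F i with h | h
    · exact h
    · rw [mem_Sp_at_iff] at h
      obtain ⟨j, hadj, hlt⟩ := h
      have := hr j hadj
      omega
  · intro hSp
    intro j hadj
    have hne : pos (nextF m F) i ≠ pos (nextF m F) j :=
      fun h => (fromEdgeSet_adj _ |>.mp hadj).2 (pos_injective _ h)
    rcases Nat.lt_or_ge (pos (nextF m F) j) (pos (nextF m F) i) with h | h
    · exfalso
      have : i ∈ Sp F (chain (nextF m F) (pos (nextF m F) i)) :=
        (mem_Sp_at_iff m F i).mpr ⟨j, hadj, h⟩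
      rw [hSp] at this
      exact absurd this (Finset.notMem_empty i)
    · omega

lemma rootF_m_le (hF : IsSpanningMForest μ m F) (i : Fin n) (hr : rootF m F i) :
    m ≤ i ∧ ∀ b ∈ chain (nextF m F) (pos (nextF m F) i), m ≤ b → i ≤ b := by
  have hSp := (rootF_iff_Sp_empty m F i).mp hr
  have hA := Aset_nonempty_of_Sp_empty μ m F hF _ (chain_pos_nonempty _ i) hSp
  have h1 := nxt_pos_eq (nextF m F) (nextF_mem m F) i
  rw [nextF, dif_neg (by rw [hSp]; simp), dif_pos hA] at h1
  have h2 : i ∈ Aset m (chain (nextF m F) (pos (nextF m F) i)) := by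
    have h2 := Finset.min'_mem _ hA
    rwa [h1] at h2
  simp only [Aset, Finset.mem_filter] at h2
  refine ⟨h2.2, fun b hb hmb => ?_⟩
  rw [← h1]
  exact Finset.min'_le _ _ (by simp only [Aset, Finset.mem_filter]; exact ⟨hb, hmb⟩)

lemma reach_rootF (v : Fin n) :
    ∃ r, rootF m F r ∧ ∃ w : (fromEdgeSet (F : Set (Sym2 (Fin n)))).Walk v r,
      ∀ x ∈ w.support, pos (nextF m F) x ≤ pos (nextF m F) v := by
  generalize hT : pos (nextF m F) v = T
  induction T using Nat.strong_induction_on generalizing v with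
  | _ T ih =>
    by_cases hr : rootF m F v
    · exact ⟨v, hr, Walk.nil, by simp [hT]⟩
    · rw [rootF] at hr
      push_neg at hr
      obtain ⟨j, hadj, hle⟩ := hr
      have hne : pos (nextF m F) v ≠ pos (nextF m F) j :=
        fun h => (fromEdgeSet_adj _ |>.mp hadj).2 (pos_injective _ h)
      have hlt : pos (nextF m F) j < pos (nextF m F) v := by omega
      obtain ⟨r, hr1, w, hw⟩ := ih (pos (nextF m F) j) (by omega) j rfl
      refine ⟨r, hr1, Walk.cons hadj w, ?_⟩
      intro x hx
      rw [Walk.support_cons] at hx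
      rcases List.mem_cons.mp hx with rfl | hx
      · omega
      · have := hw x hx
        omega

lemma unique_rootF (r₁ r₂ : Fin n) (h₁ : rootF m F r₁) (h₂ : rootF m F r₂)
    (h : (fromEdgeSet (F : Set (Sym2 (Fin n)))).Reachable r₁ r₂) : r₁ = r₂ := by
  by_contra hne
  rcases Nat.lt_trichotomy (pos (nextF m F) r₁) (pos (nextF m F) r₂) with hlt | heq | hlt
  · have := mem_of_reachable_closed
      (B := {x : Fin n | pos (nextF m F) x < pos (nextF m F) r₂})
      (fun x y hx hadj => Sp_empty_closed m F _ ((rootF_iff_Sp_empty m F r₂).mp h₂) x y hadj hx)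
      hlt h
    simp at this
  · exact hne (pos_injective _ heq)
  · have := mem_of_reachable_closed
      (B := {x : Fin n | pos (nextF m F) x < pos (nextF m F) r₁})
      (fun x y hx hadj => Sp_empty_closed m F _ ((rootF_iff_Sp_empty m F r₁).mp h₁) x y hadj hx)
      hlt h.symm
    simp at this

lemma unique_earlier (hF : IsSpanningMForest μ m F) (i j₁ j₂ : Fin n)
    (h₁ : (fromEdgeSet (F : Set (Sym2 (Fin n)))).Adj i j₁)
    (h₂ : (fromEdgeSet (F : Set (Sym2 (Fin n)))).Adj i j₂)
    (hl₁ : pos (nextF m F) j₁ < pos (nextF m F) i)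
    (hl₂ : pos (nextF m F) j₂ < pos (nextF m F) i) : j₁ = j₂ := by
  by_contra hne
  obtain ⟨r₁, hr₁, w₁, hw₁⟩ := reach_rootF m F j₁
  obtain ⟨r₂, hr₂, w₂, hw₂⟩ := reach_rootF m F j₂
  have hrr : r₁ = r₂ := by
    apply unique_rootF m F r₁ r₂ hr₁ hr₂
    exact (Reachable.symm ⟨w₁⟩).trans (h₁.symm.reachable.trans (h₂.reachable.trans ⟨w₂⟩))
  subst hrr
  -- two distinct paths from j₁ to j₂
  set W : (fromEdgeSet (F : Set (Sym2 (Fin n)))).Walk j₁ j₂ := w₁.append w₂.reverse with hW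
  have hWi : i ∉ W.support := by
    intro hi
    rw [hW, Walk.mem_support_append_iff] at hi
    rcases hi with hi | hi
    · have := hw₁ i hi; omega
    · rw [Walk.support_reverse, List.mem_reverse] at hi
      have := hw₂ i hi; omega
  have hP₁ := W.toPath
  have hP₁i : i ∉ (W.toPath : (fromEdgeSet (F : Set (Sym2 (Fin n)))).Walk j₁ j₂).support :=
    fun h => hWi (Walk.support_toPath_subset W h)
  have hpath2 : ((Walk.cons h₁.symm (Walk.cons h₂ Walk.nil)) :
      (fromEdgeSet (F : Set (Sym2 (Fin n)))).Walk j₁ j₂).IsPath := by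
    rw [Walk.isPath_def]
    simp [Walk.support_cons]
    refine ⟨⟨fun h => h₁.ne' h, hne⟩, fun h => h₂.ne h⟩
  have := isAcyclic_iff_path_unique.mp hF.2.1 W.toPath ⟨_, hpath2⟩
  rw [this] at hP₁i
  apply hP₁i
  simp [Walk.support_cons]
end Psi

section Psi2
open SimpleGraph
variable (μ : Fin n → Fin n → ℕ) (m : Fin n) (F : Finset (Sym2 (Fin n)))

lemma pos_nxt (nxt : ∀ U : Finset (Fin n), U.Nonempty → Fin n)
    (hmem : ∀ U h, nxt U h ∈ U) (t : ℕ) (h : (chain nxt t).Nonempty) :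
    pos nxt (nxt _ h) = t := by
  have h1 : nxt _ h ∈ chain nxt t := hmem _ h
  have h2 : nxt _ h ∉ chain nxt (t+1) := by
    rw [chain, dif_pos h, safePick, if_pos (hmem _ h)]
    simp
  rw [mem_chain_iff] at h1
  rw [not_mem_chain_iff] at h2
  omega

lemma card_components_eq_card_rootF :
    Nat.card (fromEdgeSet (F : Set (Sym2 (Fin n)))).ConnectedComponent
      = (Finset.univ.filter fun i => rootF m F i).card := by
  have hbij : Function.Bijective
      (fun r : {x // x ∈ Finset.univ.filter fun i => rootF m F i} =>
        (fromEdgeSet (F : Set (Sym2 (Fin n)))).connectedComponentMk r.1) := by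
    constructor
    · rintro ⟨r₁, h₁⟩ ⟨r₂, h₂⟩ h
      simp only [Finset.mem_filter, Finset.mem_univ, true_and] at h₁ h₂
      simp only [ConnectedComponent.eq] at h
      exact Subtype.ext (unique_rootF m F r₁ r₂ h₁ h₂ h)
    · intro c
      obtain ⟨v, rfl⟩ := c.exists_rep
      obtain ⟨r, hr, w, -⟩ := reach_rootF m F v
      exact ⟨⟨r, by simp [hr]⟩, SimpleGraph.ConnectedComponent.eq.mpr (Reachable.symm ⟨w⟩)⟩
  have := Nat.card_congr (Equiv.ofBijective _ hbij)
  rw [← this, Nat.card_eq_fintype_card, Fintype.card_coe]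

lemma rootF_iff_no_earlier (i : Fin n) :
    rootF m F i ↔ ¬∃ j, (fromEdgeSet (F : Set (Sym2 (Fin n)))).Adj i j ∧
      pos (nextF m F) j < pos (nextF m F) i := by
  constructor
  · rintro hr ⟨j, hadj, hlt⟩
    have := hr j hadj
    omega
  · intro h j hadj
    have hne : pos (nextF m F) i ≠ pos (nextF m F) j :=
      fun hh => (fromEdgeSet_adj _ |>.mp hadj).2 (pos_injective _ hh)
    rcases Nat.lt_or_ge (pos (nextF m F) j) (pos (nextF m F) i) with hh | hh
    · exact absurd ⟨j, hadj, hh⟩ h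
    · omega

/-- the parent of a non-root vertex in the `F`-process. -/
noncomputable def parF (i : Fin n) : Fin n :=
  if h : ∃ j, (fromEdgeSet (F : Set (Sym2 (Fin n)))).Adj i j ∧
      pos (nextF m F) j < pos (nextF m F) i then h.choose else i

lemma parF_spec (i : Fin n) (h : ¬ rootF m F i) :
    (fromEdgeSet (F : Set (Sym2 (Fin n)))).Adj i (parF m F i) ∧
      pos (nextF m F) (parF m F i) < pos (nextF m F) i := by
  rw [rootF_iff_no_earlier, not_not] at h
  rw [parF, dif_pos h]
  exact h.choose_spec

/-- parents are unique earlier neighbours. -/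
lemma parF_eq_of_earlier (hF : IsSpanningMForest μ m F) (i j : Fin n)
    (hadj : (fromEdgeSet (F : Set (Sym2 (Fin n)))).Adj i j)
    (hlt : pos (nextF m F) j < pos (nextF m F) i) : parF m F i = j := by
  have hnr : ¬ rootF m F i := by
    rw [rootF_iff_no_earlier, not_not]
    exact ⟨j, hadj, hlt⟩
  obtain ⟨h1, h2⟩ := parF_spec m F i hnr
  exact unique_earlier μ m F hF i (parF m F i) j h1 hadj h2 hlt

/-- the multiparking function associated to a forest with slot choices `σ`. -/
noncomputable def fpsi (σ : Sym2 (Fin n) → ℕ) (i : Fin n) : ℤ :=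
  if rootF m F i then -1
  else (psum (nextF m F) μ i (pos (nextF m F) (parF m F i)) : ℤ) + σ s(i, parF m F i)

lemma fpsi_root (σ : Sym2 (Fin n) → ℕ) (i : Fin n) (h : rootF m F i) :
    fpsi μ m F σ i = -1 := by rw [fpsi, if_pos h]

lemma fpsi_nonroot (σ : Sym2 (Fin n) → ℕ) (i : Fin n) (h : ¬ rootF m F i) :
    fpsi μ m F σ i =
      (psum (nextF m F) μ i (pos (nextF m F) (parF m F i)) : ℤ) + σ s(i, parF m F i) := by
  rw [fpsi, if_neg h]

lemma fpsi_lb (σ : Sym2 (Fin n) → ℕ) (i : Fin n) : -1 ≤ fpsi μ m F σ i := by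
  rw [fpsi]
  split
  · omega
  · have h1 : (0:ℤ) ≤ (psum (nextF m F) μ i (pos (nextF m F) (parF m F i)) : ℤ) := by positivity
    have h2 : (0:ℤ) ≤ (σ s(i, parF m F i) : ℤ) := by positivity
    omega

lemma fpsi_neg_iff (σ : Sym2 (Fin n) → ℕ) (i : Fin n) :
    fpsi μ m F σ i = -1 ↔ rootF m F i := by
  rw [fpsi]
  split
  · next h => simp [h]
  · next h =>
    simp only [iff_false, h]
    have h1 : (0:ℤ) ≤ (psum (nextF m F) μ i (pos (nextF m F) (parF m F i)) : ℤ) := by positivity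
    have h2 : (0:ℤ) ≤ (σ s(i, parF m F i) : ℤ) := by positivity
    omega
end Psi2

section Psi3
open SimpleGraph
variable (μ : Fin n → Fin n → ℕ) (hsym : ∀ i j, μ i j = μ j i) (m : Fin n)
  (F : Finset (Sym2 (Fin n)))

lemma fpsi_valid (hF : IsSpanningMForest μ m F) (σ : Sym2 (Fin n) → ℕ)
    (hσ : ∀ e ∈ F, σ e < Sym2.lift ⟨μ, hsym⟩ e) :
    ∀ t, (h : (chain (nextF m F) t).Nonempty) →
      Witness μ m (fpsi μ m F σ) (chain (nextF m F) t) (nextF m F _ h) := by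
  intro t h
  have hpos : pos (nextF m F) (nextF m F _ h) = t := pos_nxt (nextF m F) (nextF_mem m F) t h
  set x := nextF m F _ h with hx
  by_cases hS : (Sp F (chain (nextF m F) t)).Nonempty
  · have hxS : x ∈ Sp F (chain (nextF m F) t) := by
      rw [hx, nextF, dif_pos hS]
      exact Finset.min'_mem _ hS
    rw [mem_Sp] at hxS
    obtain ⟨hxU, j, hjU, hjF⟩ := hxS
    have hjlt : pos (nextF m F) j < t := by rwa [← not_mem_chain_iff]
    have hadj : (fromEdgeSet (F : Set (Sym2 (Fin n)))).Adj x j := by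
      rw [fromEdgeSet_adj]
      exact ⟨hjF, fun hh => by rw [hh] at hpos; omega⟩
    have hnr : ¬ rootF m F x := by
      rw [rootF_iff_no_earlier, not_not]
      exact ⟨j, hadj, by omega⟩
    have hpar : parF m F x = j := parF_eq_of_earlier μ m F hF x j hadj (by omega)
    refine ⟨hxU, Or.inr ⟨?_, ?_⟩⟩
    · rw [fpsi_nonroot μ m F σ x hnr]
      have h1 : (0:ℤ) ≤ (psum (nextF m F) μ x (pos (nextF m F) (parF m F x)) : ℤ) := by
        positivity
      have h2 : (0:ℤ) ≤ (σ s(x, parF m F x) : ℤ) := by positivity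
      omega
    · rw [fpsi_nonroot μ m F σ x hnr, ← psum_eq_outdeg]
      have hb : σ s(x, parF m F x) < μ x (parF m F x) := by
        have := hσ s(x, parF m F x) (by
          have := (parF_spec m F x hnr).1
          rw [fromEdgeSet_adj] at this
          exact_mod_cast this.1)
        rwa [Sym2.lift_mk] at this
      have hstep : psum (nextF m F) μ x (pos (nextF m F) (parF m F x)) + μ x (parF m F x)
          = psum (nextF m F) μ x (pos (nextF m F) (parF m F x) + 1) :=
        (psum_succ (nextF m F) μ x rfl).symm
      have hmono : psum (nextF m F) μ x (pos (nextF m F) (parF m F x) + 1)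
          ≤ psum (nextF m F) μ x t := by
        apply psum_mono
        rw [hpar]
        omega
      push_cast [← hstep] at hmono ⊢
      omega
  · have hSp : Sp F (chain (nextF m F) t) = ∅ := Finset.not_nonempty_iff_eq_empty.mp hS
    have hA := Aset_nonempty_of_Sp_empty μ m F hF t h hSp
    have hxA : x ∈ Aset m (chain (nextF m F) t) := by
      rw [hx, nextF, dif_neg hS, dif_pos hA]
      exact Finset.min'_mem _ hA
    simp only [Aset, Finset.mem_filter] at hxA
    have hroot : rootF m F x := by
      rw [rootF_iff_Sp_empty, hpos]
      exact hSp
    refine ⟨hxA.1, Or.inl ⟨hxA.2, ?_, fpsi_root μ m F σ x hroot⟩⟩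
    intro b hb hmb
    have : x = (Aset m (chain (nextF m F) t)).min' hA := by
      rw [hx, nextF, dif_neg hS, dif_pos hA]
    rw [this]
    exact Finset.min'_le _ _ (by simp only [Aset, Finset.mem_filter]; exact ⟨hb, hmb⟩)

lemma fpsi_isMultiparking (hF : IsSpanningMForest μ m F) (σ : Sym2 (Fin n) → ℕ)
    (hσ : ∀ e ∈ F, σ e < Sym2.lift ⟨μ, hsym⟩ e) :
    IsMultiparking μ m (fpsi μ m F σ) :=
  isMultiparking_of_valid μ m (fpsi μ m F σ) (fpsi_lb μ m F σ) (nextF m F) (nextF_mem m F)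
    (fpsi_valid μ hsym m F hF σ hσ)

lemma fpsi_roots_card (σ : Sym2 (Fin n) → ℕ) :
    (Finset.univ.filter fun v => fpsi μ m F σ v = -1).card
      = Nat.card (fromEdgeSet (F : Set (Sym2 (Fin n)))).ConnectedComponent := by
  rw [card_components_eq_card_rootF m F]
  congr 1
  ext i
  simp [fpsi_neg_iff]
end Psi3

section Congr
variable {nxt₁ nxt₂ : ∀ U : Finset (Fin n), U.Nonempty → Fin n}

lemma chain_congr
    (h : ∀ t (h1 : (chain nxt₁ t).Nonempty), nxt₁ (chain nxt₁ t) h1 = nxt₂ (chain nxt₁ t) h1) :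
    ∀ t, chain nxt₁ t = chain nxt₂ t := by
  intro t
  induction t with
  | zero => rfl
  | succ t ih =>
    rw [chain, chain, ← ih]
    by_cases h1 : (chain nxt₁ t).Nonempty
    · rw [dif_pos h1, dif_pos h1, safePick, safePick, h t h1]
    · rw [dif_neg h1, dif_neg h1]

lemma pos_congr (h : ∀ t, chain nxt₁ t = chain nxt₂ t) (v : Fin n) :
    pos nxt₁ v = pos nxt₂ v := by
  have : ∀ t, v ∉ chain nxt₁ t ↔ v ∉ chain nxt₂ t := fun t => by rw [h t]
  have h1 := pos_add_one nxt₁ v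
  have h2 := pos_add_one nxt₂ v
  have : Nat.find (⟨n, by rw [chain_n]; exact Finset.notMem_empty v⟩ :
      ∃ t, v ∉ chain nxt₁ t) = Nat.find (⟨n, by rw [chain_n]; exact Finset.notMem_empty v⟩ :
      ∃ t, v ∉ chain nxt₂ t) := by
    congr 1
    ext t
    rw [h t]
  omega

lemma psum_congr (μ : Fin n → Fin n → ℕ) (h : ∀ t, chain nxt₁ t = chain nxt₂ t) (i : Fin n)
    (T : ℕ) : psum nxt₁ μ i T = psum nxt₂ μ i T := by
  rw [psum, psum]
  apply Finset.sum_congr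
  · ext x
    simp [pos_congr h]
  · intros; rfl
end Congr

section FfForest
open SimpleGraph
variable (μ : Fin n → Fin n → ℕ) (m : Fin n) (f : Fin n → ℤ)

lemma Ff_edge (hsym : ∀ i j, μ i j = μ j i) (hf : IsMultiparking μ m f) (i j : Fin n)
    (h : s(i, j) ∈ Ff μ m f hf) :
    i ≠ j ∧ 1 ≤ μ i j := by
  rw [mem_Ff_iff] at h
  obtain ⟨c, h0, hc⟩ := h
  rw [Sym2.eq_iff] at hc
  rcases hc with ⟨rfl, rfl⟩ | ⟨rfl, rfl⟩
  · exact ⟨Ne.symm (par_ne μ m f hf i h0), one_le_mu_par μ m f hf i h0⟩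
  · refine ⟨par_ne μ m f hf j h0, ?_⟩
    rw [hsym (par μ m f hf j) j]
    exact one_le_mu_par μ m f hf j h0

lemma Ff_isSpanningMForest (hsym : ∀ i j, μ i j = μ j i) (hf : IsMultiparking μ m f) :
    IsSpanningMForest μ m (Ff μ m f hf) := by
  refine ⟨Ff_edge μ m f hsym hf, Ff_acyclic μ m f hf, fun v => ?_⟩
  obtain ⟨w, h1, h2, _⟩ := Ff_reach μ m f hf v
  exact ⟨w, h1, h2⟩
end FfForest

section RT
open SimpleGraph
variable (μ : Fin n → Fin n → ℕ) (m : Fin n)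

lemma next_eq_of_S_eq (f : Fin n → ℤ) (F : Finset (Sym2 (Fin n))) (U : Finset (Fin n))
    (h : U.Nonempty) (hS : Sset μ f U = Sp F U) : nextf μ m f U h = nextF m F U h := by
  rw [nextf, nextF, hS]

lemma Sp_eq_Sset_psi (F : Finset (Sym2 (Fin n))) (hsym : ∀ i j, μ i j = μ j i)
    (hF : IsSpanningMForest μ m F) (σ : Sym2 (Fin n) → ℕ)
    (hσ : ∀ e ∈ F, σ e < Sym2.lift ⟨μ, hsym⟩ e) (t : ℕ) :
    Sset μ (fpsi μ m F σ) (chain (nextF m F) t) = Sp F (chain (nextF m F) t) := by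
  ext i
  simp only [Sset, Sp, Finset.mem_filter]
  constructor
  · rintro ⟨hiU, h0, hlt⟩
    refine ⟨hiU, ?_⟩
    have hnr : ¬ rootF m F i := by
      intro hr; rw [fpsi_root μ m F σ i hr] at h0; omega
    obtain ⟨hadj, hplt⟩ := parF_spec m F i hnr
    rw [← psum_eq_outdeg μ (nextF m F) i t, fpsi_nonroot μ m F σ i hnr] at hlt
    have hpt : pos (nextF m F) (parF m F i) < t := by
      by_contra hc
      push_neg at hc
      have h1 : psum (nextF m F) μ i t ≤ psum (nextF m F) μ i (pos (nextF m F) (parF m F i)) :=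
        psum_mono _ μ i hc
      have h2 : (0:ℤ) ≤ (σ s(i, parF m F i) : ℤ) := by positivity
      omega
    refine ⟨parF m F i, by rw [not_mem_chain_iff]; exact hpt, ?_⟩
    rw [fromEdgeSet_adj] at hadj
    exact hadj.1
  · rintro ⟨hiU, j, hjU, hjF⟩
    rw [not_mem_chain_iff] at hjU
    rw [mem_chain_iff] at hiU
    have hadj : (fromEdgeSet (F : Set (Sym2 (Fin n)))).Adj i j := by
      rw [fromEdgeSet_adj]
      exact ⟨hjF, fun hh => by subst hh; omega⟩
    have hnr : ¬ rootF m F i := by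
      rw [rootF_iff_no_earlier, not_not]
      exact ⟨j, hadj, by omega⟩
    have hpar : parF m F i = j := parF_eq_of_earlier μ m F hF i j hadj (by omega)
    have h0 : (0:ℤ) ≤ fpsi μ m F σ i := by
      have := fpsi_neg_iff μ m F σ i
      have := fpsi_lb μ m F σ i
      rcases eq_or_lt_of_le (fpsi_lb μ m F σ i) with h | h
      · exact absurd ((fpsi_neg_iff μ m F σ i).mp h.symm) hnr
      · omega
    refine ⟨by rw [mem_chain_iff]; omega, h0, ?_⟩
    rw [← psum_eq_outdeg μ (nextF m F) i t, fpsi_nonroot μ m F σ i hnr]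
    have hb : σ s(i, parF m F i) < μ i (parF m F i) := by
      have h2 := hσ s(i, parF m F i) (by
        have := (parF_spec m F i hnr).1
        rw [fromEdgeSet_adj] at this
        exact_mod_cast this.1)
      rwa [Sym2.lift_mk] at h2
    have hstep : psum (nextF m F) μ i (pos (nextF m F) (parF m F i)) + μ i (parF m F i)
        = psum (nextF m F) μ i (pos (nextF m F) (parF m F i) + 1) :=
      (psum_succ (nextF m F) μ i rfl).symm
    have hmono : psum (nextF m F) μ i (pos (nextF m F) (parF m F i) + 1)
        ≤ psum (nextF m F) μ i t := by
      apply psum_mono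
      rw [hpar]
      omega
    push_cast [← hstep] at hmono ⊢
    omega

lemma chain_psi_eq (F : Finset (Sym2 (Fin n))) (hsym : ∀ i j, μ i j = μ j i)
    (hF : IsSpanningMForest μ m F) (σ : Sym2 (Fin n) → ℕ)
    (hσ : ∀ e ∈ F, σ e < Sym2.lift ⟨μ, hsym⟩ e) (t : ℕ) :
    chain (nextF m F) t = chain (nextf μ m (fpsi μ m F σ)) t :=
  chain_congr (fun t h1 =>
    (next_eq_of_S_eq μ m (fpsi μ m F σ) F _ h1 (Sp_eq_Sset_psi μ m F hsym hF σ hσ t)).symm) t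

lemma Sp_eq_Sset_phi (f : Fin n → ℤ) (hf : IsMultiparking μ m f) (t : ℕ) :
    Sset μ f (chain (nextf μ m f) t) = Sp (Ff μ m f hf) (chain (nextf μ m f) t) := by
  ext i
  simp only [Sset, Sp, Finset.mem_filter]
  constructor
  · rintro ⟨hiU, h0, hlt⟩
    refine ⟨hiU, par μ m f hf i, ?_, (mem_Ff_iff μ m f hf _).mpr ⟨i, h0, rfl⟩⟩
    rw [not_mem_chain_iff]
    -- pos par < t from f i < psum t
    rw [← psum_eq_outdeg μ (nextf μ m f) i t] at hlt
    by_contra hc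
    push_neg at hc
    have h1 : psum (nextf μ m f) μ i t
        ≤ psum (nextf μ m f) μ i (pos (nextf μ m f) (par μ m f hf i)) :=
      psum_mono _ μ i hc
    have h2 := (par_spec μ m f hf i h0).2.1
    omega
  · rintro ⟨hiU, j, hjU, hjF⟩
    rw [not_mem_chain_iff] at hjU
    rw [mem_chain_iff] at hiU
    obtain ⟨h0, hpar⟩ := earlier_nbr μ m f hf i j hjF (by omega)
    refine ⟨by rw [mem_chain_iff]; omega, h0, ?_⟩
    rw [← psum_eq_outdeg μ (nextf μ m f) i t]
    have h2 := (par_spec μ m f hf i h0).2.2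
    have hstep : psum (nextf μ m f) μ i (pos (nextf μ m f) (par μ m f hf i))
        + μ i (par μ m f hf i)
        = psum (nextf μ m f) μ i (pos (nextf μ m f) (par μ m f hf i) + 1) :=
      (psum_succ (nextf μ m f) μ i rfl).symm
    have hjU' : pos (nextf μ m f) (par μ m f hf i) < t := by rw [← hpar]; exact hjU
    have hmono : psum (nextf μ m f) μ i (pos (nextf μ m f) (par μ m f hf i) + 1)
        ≤ psum (nextf μ m f) μ i t := psum_mono _ μ i (by omega)
    push_cast [← hstep] at hmono
    omega

lemma chain_phi_eq (f : Fin n → ℤ) (hf : IsMultiparking μ m f) (t : ℕ) :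
    chain (nextf μ m f) t = chain (nextF m (Ff μ m f hf)) t :=
  chain_congr (fun t h1 =>
    next_eq_of_S_eq μ m f (Ff μ m f hf) _ h1 (Sp_eq_Sset_phi μ m f hf t)) t
end RT

section Sigf
open SimpleGraph
variable (μ : Fin n → Fin n → ℕ) (m : Fin n) (f : Fin n → ℤ)

lemma rep_unique (hf : IsMultiparking μ m f) (i i' : Fin n) (h0 : 0 ≤ f i) (h0' : 0 ≤ f i')
    (he : s(i, par μ m f hf i) = s(i', par μ m f hf i')) : i = i' := by
  rw [Sym2.eq_iff] at he
  rcases he with ⟨h1, -⟩ | ⟨h1, h2⟩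
  · exact h1
  · exfalso
    have ha := par_pos_lt μ m f hf i h0
    have hb := par_pos_lt μ m f hf i' h0'
    rw [← h1] at hb
    rw [h2] at ha
    omega

/-- slot values extracted from a multiparking function. -/
noncomputable def sigf (hf : IsMultiparking μ m f) : Sym2 (Fin n) → ℕ := fun e =>
  if h : ∃ i, 0 ≤ f i ∧ e = s(i, par μ m f hf i) then
    (f h.choose - (psum (nextf μ m f) μ h.choose
      (pos (nextf μ m f) (par μ m f hf h.choose)) : ℤ)).toNat
  else 0

lemma sigf_spec (hf : IsMultiparking μ m f) (i : Fin n) (h0 : 0 ≤ f i) :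
    sigf μ m f hf s(i, par μ m f hf i)
      = (f i - (psum (nextf μ m f) μ i (pos (nextf μ m f) (par μ m f hf i)) : ℤ)).toNat := by
  rw [sigf]
  have hex : ∃ c, 0 ≤ f c ∧ s(i, par μ m f hf i) = s(c, par μ m f hf c) := ⟨i, h0, rfl⟩
  rw [dif_pos hex]
  have := hex.choose_spec
  have hc : hex.choose = i := (rep_unique μ m f hf _ i this.1 h0 this.2.symm)
  rw [hc]

lemma sigf_bound (hsym : ∀ i j, μ i j = μ j i) (hf : IsMultiparking μ m f) :
    ∀ e ∈ Ff μ m f hf, sigf μ m f hf e < Sym2.lift ⟨μ, hsym⟩ e := by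
  intro e he
  rw [mem_Ff_iff] at he
  obtain ⟨i, h0, rfl⟩ := he
  rw [sigf_spec μ m f hf i h0, Sym2.lift_mk]
  have h1 := (par_spec μ m f hf i h0).2.1
  have h2 := (par_spec μ m f hf i h0).2.2
  show (f i - (psum (nextf μ m f) μ i (pos (nextf μ m f) (par μ m f hf i)) : ℤ)).toNat
    < μ i (par μ m f hf i)
  omega

lemma sigf_zero (hf : IsMultiparking μ m f) (e : Sym2 (Fin n)) (he : e ∉ Ff μ m f hf) :
    sigf μ m f hf e = 0 := by
  rw [sigf, dif_neg]
  rintro ⟨i, h0, rfl⟩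
  exact he ((mem_Ff_iff μ m f hf _).mpr ⟨i, h0, rfl⟩)

lemma rootF_Ff_iff (hf : IsMultiparking μ m f) (i : Fin n) :
    rootF m (Ff μ m f hf) i ↔ f i = -1 := by
  have hpos : ∀ v, pos (nextF m (Ff μ m f hf)) v = pos (nextf μ m f) v :=
    fun v => (pos_congr (chain_phi_eq μ m f hf) v).symm
  constructor
  · intro hr
    by_contra hne
    have h0 : 0 ≤ f i := by have := hf.1 i; omega
    have hadj := Ff_adj_par μ m f hf i h0
    have := hr _ hadj
    rw [hpos, hpos] at this
    have := par_pos_lt μ m f hf i h0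
    omega
  · intro hroot
    rw [rootF_iff_no_earlier]
    rintro ⟨j, hadj, hlt⟩
    rw [hpos, hpos] at hlt
    have := earlier_nbr μ m f hf i j ((Ff_adj μ m f hf i j).mp hadj).1 hlt
    omega

lemma parF_Ff_eq (hsym : ∀ i j, μ i j = μ j i) (hf : IsMultiparking μ m f) (i : Fin n)
    (h0 : 0 ≤ f i) : parF m (Ff μ m f hf) i = par μ m f hf i := by
  have hpos : ∀ v, pos (nextF m (Ff μ m f hf)) v = pos (nextf μ m f) v :=
    fun v => (pos_congr (chain_phi_eq μ m f hf) v).symm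
  apply parF_eq_of_earlier μ m (Ff μ m f hf) (Ff_isSpanningMForest μ m f hsym hf) i
    (par μ m f hf i) (Ff_adj_par μ m f hf i h0)
  rw [hpos, hpos]
  exact par_pos_lt μ m f hf i h0

/-- Left inverse: reconstructing `f` from its forest and slots. -/
lemma fpsi_Ff_eq (hsym : ∀ i j, μ i j = μ j i) (hf : IsMultiparking μ m f) :
    fpsi μ m (Ff μ m f hf) (sigf μ m f hf) = f := by
  funext i
  by_cases hroot : f i = -1
  · rw [fpsi_root μ m (Ff μ m f hf) _ i ((rootF_Ff_iff μ m f hf i).mpr hroot), hroot]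
  · have h0 : 0 ≤ f i := by have := hf.1 i; omega
    have hnr : ¬ rootF m (Ff μ m f hf) i := fun h => hroot ((rootF_Ff_iff μ m f hf i).mp h)
    rw [fpsi_nonroot μ m (Ff μ m f hf) _ i hnr, parF_Ff_eq μ m f hsym hf i h0,
      sigf_spec μ m f hf i h0]
    have hpos : ∀ v, pos (nextF m (Ff μ m f hf)) v = pos (nextf μ m f) v :=
      fun v => (pos_congr (chain_phi_eq μ m f hf) v).symm
    have hpsum : ∀ T, psum (nextF m (Ff μ m f hf)) μ i T = psum (nextf μ m f) μ i T :=
      fun T => (psum_congr μ (chain_phi_eq μ m f hf) i T).symm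
    rw [hpos, hpsum]
    have h1 := (par_spec μ m f hf i h0).2.1
    omega
end Sigf

section RT2
open SimpleGraph
variable (μ : Fin n → Fin n → ℕ) (m : Fin n) (F : Finset (Sym2 (Fin n)))

lemma fpsi_nonneg_iff (σ : Sym2 (Fin n) → ℕ) (i : Fin n) :
    0 ≤ fpsi μ m F σ i ↔ ¬ rootF m F i := by
  constructor
  · intro h0 hr
    rw [fpsi_root μ m F σ i hr] at h0
    omega
  · intro hnr
    rcases eq_or_lt_of_le (fpsi_lb μ m F σ i) with h | h
    · exact absurd ((fpsi_neg_iff μ m F σ i).mp h.symm) hnr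
    · omega

lemma par_psi_eq (hsym : ∀ i j, μ i j = μ j i) (hF : IsSpanningMForest μ m F)
    (σ : Sym2 (Fin n) → ℕ) (hσ : ∀ e ∈ F, σ e < Sym2.lift ⟨μ, hsym⟩ e) (i : Fin n)
    (h0 : 0 ≤ fpsi μ m F σ i) :
    par μ m (fpsi μ m F σ) (fpsi_isMultiparking μ hsym m F hF σ hσ) i = parF m F i := by
  have hnr : ¬ rootF m F i := (fpsi_nonneg_iff μ m F σ i).mp h0
  have hpos : ∀ v, pos (nextf μ m (fpsi μ m F σ)) v = pos (nextF m F) v :=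
    fun v => (pos_congr (chain_psi_eq μ m F hsym hF σ hσ) v).symm
  have hpsum : ∀ T, psum (nextf μ m (fpsi μ m F σ)) μ i T = psum (nextF m F) μ i T :=
    fun T => (psum_congr μ (chain_psi_eq μ m F hsym hF σ hσ) i T).symm
  symm
  apply par_unique μ m (fpsi μ m F σ) _ i h0
  have hb : σ s(i, parF m F i) < μ i (parF m F i) := by
    have h2 := hσ s(i, parF m F i) (by
      have := (parF_spec m F i hnr).1
      rw [fromEdgeSet_adj] at this
      exact_mod_cast this.1)
    rwa [Sym2.lift_mk] at h2
  refine ⟨?_, ?_, ?_⟩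
  · rw [hpos, hpos]
    exact (parF_spec m F i hnr).2
  · rw [hpos, hpsum, fpsi_nonroot μ m F σ i hnr]
    have : (0:ℤ) ≤ (σ s(i, parF m F i) : ℤ) := by positivity
    omega
  · rw [hpos, hpsum, fpsi_nonroot μ m F σ i hnr]
    push_cast
    omega

lemma Ff_psi_eq (hsym : ∀ i j, μ i j = μ j i) (hF : IsSpanningMForest μ m F)
    (σ : Sym2 (Fin n) → ℕ) (hσ : ∀ e ∈ F, σ e < Sym2.lift ⟨μ, hsym⟩ e) :
    Ff μ m (fpsi μ m F σ) (fpsi_isMultiparking μ hsym m F hF σ hσ) = F := by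
  ext e
  induction e with
  | _ a b =>
    rw [mem_Ff_iff]
    constructor
    · rintro ⟨i, h0, he⟩
      rw [he, par_psi_eq μ m F hsym hF σ hσ i h0]
      have hnr : ¬ rootF m F i := (fpsi_nonneg_iff μ m F σ i).mp h0
      have := (parF_spec m F i hnr).1
      rw [fromEdgeSet_adj] at this
      exact_mod_cast this.1
    · intro he
      have hne : a ≠ b := (hF.1 a b he).1
      have hadj : (fromEdgeSet (F : Set (Sym2 (Fin n)))).Adj a b := by
        rw [fromEdgeSet_adj]; exact ⟨he, hne⟩
      have hpne : pos (nextF m F) a ≠ pos (nextF m F) b :=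
        fun h => hne (pos_injective _ h)
      rcases Nat.lt_or_ge (pos (nextF m F) b) (pos (nextF m F) a) with hlt | hge
      · have hnr : ¬ rootF m F a := by
          rw [rootF_iff_no_earlier, not_not]
          exact ⟨b, hadj, hlt⟩
        have h0 : 0 ≤ fpsi μ m F σ a := (fpsi_nonneg_iff μ m F σ a).mpr hnr
        refine ⟨a, h0, ?_⟩
        rw [par_psi_eq μ m F hsym hF σ hσ a h0,
          parF_eq_of_earlier μ m F hF a b hadj hlt]
      · have hlt : pos (nextF m F) a < pos (nextF m F) b := by omega
        have hnr : ¬ rootF m F b := by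
          rw [rootF_iff_no_earlier, not_not]
          exact ⟨a, hadj.symm, hlt⟩
        have h0 : 0 ≤ fpsi μ m F σ b := (fpsi_nonneg_iff μ m F σ b).mpr hnr
        refine ⟨b, h0, ?_⟩
        rw [par_psi_eq μ m F hsym hF σ hσ b h0,
          parF_eq_of_earlier μ m F hF b a hadj.symm hlt]
        rw [Sym2.eq_swap]

lemma sigf_psi_eq (hsym : ∀ i j, μ i j = μ j i) (hF : IsSpanningMForest μ m F)
    (σ : Sym2 (Fin n) → ℕ) (hσ : ∀ e ∈ F, σ e < Sym2.lift ⟨μ, hsym⟩ e)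
    (hσ0 : ∀ e ∉ F, σ e = 0) :
    sigf μ m (fpsi μ m F σ) (fpsi_isMultiparking μ hsym m F hF σ hσ) = σ := by
  funext e
  by_cases he : e ∈ F
  · induction e with
    | _ a b =>
      have hne : a ≠ b := (hF.1 a b he).1
      have hadj : (fromEdgeSet (F : Set (Sym2 (Fin n)))).Adj a b := by
        rw [fromEdgeSet_adj]; exact ⟨he, hne⟩
      have hpne : pos (nextF m F) a ≠ pos (nextF m F) b :=
        fun h => hne (pos_injective _ h)
      -- wlog: handle the later endpoint
      have key : ∀ a b : Fin n, (fromEdgeSet (F : Set (Sym2 (Fin n)))).Adj a b →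
          pos (nextF m F) b < pos (nextF m F) a →
          sigf μ m (fpsi μ m F σ) (fpsi_isMultiparking μ hsym m F hF σ hσ) s(a, b)
            = σ s(a, b) := by
        intro a b hadj hlt
        have hnr : ¬ rootF m F a := by
          rw [rootF_iff_no_earlier, not_not]
          exact ⟨b, hadj, hlt⟩
        have h0 : 0 ≤ fpsi μ m F σ a := (fpsi_nonneg_iff μ m F σ a).mpr hnr
        have hpar : par μ m (fpsi μ m F σ) (fpsi_isMultiparking μ hsym m F hF σ hσ) a = b := by
          rw [par_psi_eq μ m F hsym hF σ hσ a h0, parF_eq_of_earlier μ m F hF a b hadj hlt]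
        have h1 : s(a, b) = s(a, par μ m (fpsi μ m F σ)
            (fpsi_isMultiparking μ hsym m F hF σ hσ) a) := by rw [hpar]
        rw [h1, sigf_spec μ m (fpsi μ m F σ) _ a h0, hpar]
        have hpos : ∀ v, pos (nextf μ m (fpsi μ m F σ)) v = pos (nextF m F) v :=
          fun v => (pos_congr (chain_psi_eq μ m F hsym hF σ hσ) v).symm
        have hpsum : ∀ T, psum (nextf μ m (fpsi μ m F σ)) μ a T = psum (nextF m F) μ a T :=
          fun T => (psum_congr μ (chain_psi_eq μ m F hsym hF σ hσ) a T).symm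
        rw [hpos, hpsum, fpsi_nonroot μ m F σ a hnr,
          parF_eq_of_earlier μ m F hF a b hadj hlt]
        omega
      rcases Nat.lt_or_ge (pos (nextF m F) b) (pos (nextF m F) a) with hlt | hge
      · exact key a b hadj hlt
      · rw [(Sym2.eq_swap : s(a,b) = s(b,a))]
        exact key b a hadj.symm (by omega)
  · rw [hσ0 e he, sigf_zero]
    rw [Ff_psi_eq μ m F hsym hF σ hσ]
    exact he
end RT2

section Assembly
open SimpleGraph
variable (μ : Fin n → Fin n → ℕ) (m : Fin n)

/-- decorated forests: a forest together with slot values. -/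
def DecForest (hsym : ∀ i j, μ i j = μ j i) (k : ℕ) : Type _ :=
  {p : Finset (Sym2 (Fin n)) × (Sym2 (Fin n) → ℕ) //
    (IsSpanningMForest μ m p.1 ∧
      Nat.card (fromEdgeSet (p.1 : Set (Sym2 (Fin n)))).ConnectedComponent = k) ∧
    (∀ e ∈ p.1, p.2 e < Sym2.lift ⟨μ, hsym⟩ e) ∧ (∀ e ∉ p.1, p.2 e = 0)}

noncomputable def mainEquiv (hsym : ∀ i j, μ i j = μ j i) (k : ℕ) :
    {f : Fin n → ℤ // IsMultiparking μ m f ∧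
        (Finset.univ.filter (fun v => f v = -1)).card = k} ≃ DecForest μ m hsym k where
  toFun f :=
    ⟨(Ff μ m f.1 f.2.1, sigf μ m f.1 f.2.1),
      ⟨⟨Ff_isSpanningMForest μ m f.1 hsym f.2.1,
        by rw [Ff_card_components μ m f.1 f.2.1]; exact f.2.2⟩,
        sigf_bound μ m f.1 hsym f.2.1, sigf_zero μ m f.1 f.2.1⟩⟩
  invFun p :=
    ⟨fpsi μ m p.1.1 p.1.2,
      fpsi_isMultiparking μ hsym m p.1.1 p.2.1.1 p.1.2 p.2.2.1,
      by rw [fpsi_roots_card μ m p.1.1 p.1.2]; exact p.2.1.2⟩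
  left_inv f := Subtype.ext (fpsi_Ff_eq μ m f.1 hsym f.2.1)
  right_inv p := by
    obtain ⟨⟨F, σ⟩, ⟨hF, hc⟩, hb, h0⟩ := p
    refine Subtype.ext (Prod.ext ?_ ?_)
    · exact Ff_psi_eq μ m F hsym hF σ hb
    · exact sigf_psi_eq μ m F hsym hF σ hb h0

noncomputable def decEquiv (hsym : ∀ i j, μ i j = μ j i) (k : ℕ) :
    DecForest μ m hsym k ≃
      Σ F : {F : Finset (Sym2 (Fin n)) // IsSpanningMForest μ m F ∧
        Nat.card (fromEdgeSet (F : Set (Sym2 (Fin n)))).ConnectedComponent = k},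
        (∀ e : {e // e ∈ F.1}, Fin (Sym2.lift ⟨μ, hsym⟩ e.1)) where
  toFun p := ⟨⟨p.1.1, p.2.1⟩, fun e => ⟨p.1.2 e.1, p.2.2.1 e.1 e.2⟩⟩
  invFun q :=
    ⟨(q.1.1, fun e => if h : e ∈ q.1.1 then (q.2 ⟨e, h⟩).1 else 0),
      ⟨q.1.2, fun e he => by
          show (if h : e ∈ q.1.1 then ((q.2 ⟨e, h⟩ : Fin _) : ℕ) else 0) < _
          rw [dif_pos he]; exact (q.2 ⟨e, he⟩).2,
        fun e he => by
          show (if h : e ∈ q.1.1 then ((q.2 ⟨e, h⟩ : Fin _) : ℕ) else 0) = 0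
          rw [dif_neg he]⟩⟩
  left_inv p := by
    obtain ⟨⟨F, σ⟩, hgood, hb, h0⟩ := p
    refine Subtype.ext (Prod.ext rfl ?_)
    funext e
    show (if h : e ∈ F then _ else 0) = σ e
    by_cases he : e ∈ F
    · rw [dif_pos he]
    · rw [dif_neg he]
      exact (h0 e he).symm
  right_inv q := by
    obtain ⟨⟨F, hF⟩, g⟩ := q
    refine Sigma.ext rfl ?_
    simp only [heq_eq_eq]
    funext e
    ext
    simp [e.2]

lemma card_sum (hsym : ∀ i j, μ i j = μ j i) (k : ℕ) :
    Nat.card (DecForest μ m hsym k) =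
      ∑ F ∈ Finset.univ.filter (fun F => IsSpanningMForest μ m F ∧
          Nat.card (fromEdgeSet (F : Set (Sym2 (Fin n)))).ConnectedComponent = k),
        ∏ e ∈ F, Sym2.lift ⟨μ, hsym⟩ e := by
  rw [Nat.card_congr (decEquiv μ m hsym k), Nat.card_eq_fintype_card, Fintype.card_sigma]
  rw [Finset.sum_subtype (p := fun F => IsSpanningMForest μ m F ∧
      Nat.card (fromEdgeSet (F : Set (Sym2 (Fin n)))).ConnectedComponent = k)
    (Finset.univ.filter (fun F => IsSpanningMForest μ m F ∧
      Nat.card (fromEdgeSet (F : Set (Sym2 (Fin n)))).ConnectedComponent = k))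
    (by intro x; simp only [Finset.mem_filter, Finset.mem_univ, true_and])
    (fun F => ∏ e ∈ F, Sym2.lift ⟨μ, hsym⟩ e)]
  congr 1
  funext F
  rw [Fintype.card_pi]
  rw [← Finset.prod_coe_sort F.1 (fun e => Sym2.lift ⟨μ, hsym⟩ e)]
  congr 1
  funext e
  rw [Fintype.card_fin]
end Assembly
end MPK
end

/-- The number of `(G,m)`-multiparking functions with exactly `k` roots equals the
weighted count `Σ_F Π_{{i,j} ∈ F} μ(i,j)` over spanning `m`-forests `F` of `G`
with exactly `k` connected components. -/
theorem multiparking_count_with_k_roots {n : ℕ} (μ : Fin n → Fin n → ℕ)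
    (hsym : ∀ i j, μ i j = μ j i) (hconn : (supportGraph μ).Connected) (m : Fin n)
    (k : ℕ) (hk : 1 ≤ k) :
    {f : Fin n → ℤ | IsMultiparking μ m f ∧
        (Finset.univ.filter (fun v => f v = -1)).card = k}.ncard =
      ∑ F ∈ Finset.univ.filter (fun F => IsSpanningMForest μ m F ∧
          Nat.card (SimpleGraph.fromEdgeSet (F : Set (Sym2 (Fin n)))).ConnectedComponent = k),
        ∏ e ∈ F, Sym2.lift ⟨μ, hsym⟩ e := by
  rw [← MPK.card_sum μ m hsym k, ← Nat.card_coe_set_eq]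
  exact Nat.card_congr (MPK.mainEquiv μ m hsym k)
end

section
/- Let G be a connected multigraph on vertex set [n] = {1,…,n}, let 1 ≤ m ≤ n, and let f : [n] → ℤ with f(i) ≥ −1 for all i. Define h_f : [n] → ℤ by h_f(i) = deg_G(i) − f(i). Then f is a (G,m)-multiparking function if and only if h_f takes values in ℕ and is a (G,m)-multiparking complement function. -/
open scoped Classical

/-- In-degree of vertex `i` with respect to a vertex subset `I`:
the number of edges from `i` to vertices inside `I`. -/
def indeg {n : ℕ} (μ : Fin n → Fin n → ℕ) (I : Finset (Fin n)) (i : Fin n) : ℕ :=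
  ∑ j ∈ I, μ i j

/-- The degree of vertex `i` in the multigraph `μ` (each loop at `i` counted once). -/
def degG {n : ℕ} (μ : Fin n → Fin n → ℕ) (i : Fin n) : ℕ :=
  ∑ j, μ i j

/-- A `(G,m)`-multiparking complement function: for every nonempty `I`, either
(Ā) `I` contains a vertex `≥ m` and `h(α(I,m)) = deg_G(α(I,m)) + 1`, or
(B̄) there is `i ∈ I` with `indeg_I(i) < h(i) ≤ deg_G(i)`. -/
def IsMultiparkingComplement {n : ℕ} (μ : Fin n → Fin n → ℕ) (m : Fin n)
    (h : Fin n → ℤ) : Prop :=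
  ∀ I : Finset (Fin n), I.Nonempty →
    (∃ a ∈ I, m ≤ a ∧ (∀ b ∈ I, m ≤ b → a ≤ b) ∧ h a = (degG μ a : ℤ) + 1) ∨
    (∃ i ∈ I, (indeg μ I i : ℤ) < h i ∧ h i ≤ (degG μ i : ℤ))

lemma deg_split {n : ℕ} (μ : Fin n → Fin n → ℕ) (I : Finset (Fin n)) (i : Fin n) :
    degG μ i = indeg μ I i + outdeg μ I i := by
  simpa [degG, indeg, outdeg] using (Finset.sum_add_sum_compl I (fun j => μ i j)).symm

/-- `f` is a `(G,m)`-multiparking function iff `h_f(i) = deg_G(i) - f(i)` takes values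
in `ℕ` and is a `(G,m)`-multiparking complement function. -/
theorem multiparking_iff_complement {n : ℕ} (μ : Fin n → Fin n → ℕ)
    (hsym : ∀ i j, μ i j = μ j i) (m : Fin n)
    (hconn : (supportGraph μ).Connected)
    (f : Fin n → ℤ) (hf : ∀ i, -1 ≤ f i) :
    IsMultiparking μ m f ↔
      ((∀ i, 0 ≤ (degG μ i : ℤ) - f i) ∧
        IsMultiparkingComplement μ m (fun i => (degG μ i : ℤ) - f i)) := by
  have key : ∀ (I : Finset (Fin n)) (i : Fin n),
      (degG μ i : ℤ) = (indeg μ I i : ℤ) + (outdeg μ I i : ℤ) := by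
    intro I i
    exact_mod_cast congrArg (Nat.cast : ℕ → ℤ) (deg_split μ I i)
  constructor
  · rintro ⟨-, hB⟩
    have hub : ∀ i, f i ≤ (degG μ i : ℤ) := by
      intro i
      rcases hB {i} ⟨i, Finset.mem_singleton_self i⟩ with ⟨a, ha, -, -, hfa⟩ | ⟨j, hj, h0, hlt⟩
      · rw [Finset.mem_singleton] at ha; subst ha
        have : (0:ℤ) ≤ (degG μ a : ℤ) := Int.natCast_nonneg _
        linarith [hfa]
      · rw [Finset.mem_singleton] at hj; subst hj
        have := key {j} j
        have h2 : (0:ℤ) ≤ (indeg μ {j} j : ℤ) := Int.natCast_nonneg _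
        linarith
    refine ⟨fun i => by linarith [hub i], fun I hI => ?_⟩
    rcases hB I hI with ⟨a, ha, hma, hmin, hfa⟩ | ⟨i, hi, h0, hlt⟩
    · refine Or.inl ⟨a, ha, hma, hmin, ?_⟩
      show (degG μ a : ℤ) - f a = (degG μ a : ℤ) + 1
      rw [hfa]; ring
    · refine Or.inr ⟨i, hi, ?_, ?_⟩
      · show (indeg μ I i : ℤ) < (degG μ i : ℤ) - f i
        have := key I i; linarith
      · show (degG μ i : ℤ) - f i ≤ (degG μ i : ℤ)
        linarith
  · rintro ⟨hnn, hC⟩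
    refine ⟨hf, fun I hI => ?_⟩
    rcases hC I hI with ⟨a, ha, hma, hmin, hfa⟩ | ⟨i, hi, hlt, hle⟩
    · refine Or.inl ⟨a, ha, hma, hmin, ?_⟩
      have : (degG μ a : ℤ) - f a = (degG μ a : ℤ) + 1 := hfa
      linarith
    · have hlt' : (indeg μ I i : ℤ) < (degG μ i : ℤ) - f i := hlt
      have hle' : (degG μ i : ℤ) - f i ≤ (degG μ i : ℤ) := hle
      refine Or.inr ⟨i, hi, by linarith, ?_⟩
      have := key I i; linarith
end
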